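/- arXiv:2206.00984 — 2 statements merged into one kernel-verified Lean document; each statement's English description precedes it below -/
import Mathlib

section
/- Let ξ_j = ψ_j e^{-iθ_j} where ψ_j solves ψ̇_j = i a_j ψ_j + (κ/N) Σ_k (ψ_k - ⟨ψ_j, ψ_k⟩ ψ_j) with unit-norm states and θ_j solves θ̇_j = a_j + (2κ/N) Σ_k sin(θ_k - θ_j). Then h_{ij} := ⟨ξ_i, ξ_j⟩ satisfies ḣ_{ij} = (κ/N) Σ_k [ e^{i(θ_k-θ_i)}(h_{kj} - h_{ij}) + e^{i(θ_i-θ_k)}(1 - h_{ik}) h_{ij} + e^{i(θ_j-θ_k)}(h_{ik} - h_{ij}) + e^{i(θ_k-θ_j)}(1 - h_{kj}) h_{ij} ]. -/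
open Complex Finset

lemma key_alg (c Ei Ej Ex qjx qxi p : ℂ) (hi : Ei ≠ 0) (hj : Ej ≠ 0) (hx : Ex ≠ 0) :
    c * (Ex / Ei * (Ej * Ex⁻¹ * qjx - Ej * Ei⁻¹ * p) +
          Ei / Ex * (1 - Ex * Ei⁻¹ * qxi) * (Ej * Ei⁻¹ * p) +
          Ej / Ex * (Ex * Ei⁻¹ * qxi - Ej * Ei⁻¹ * p) +
          Ex / Ej * (1 - Ej * Ex⁻¹ * qjx) * (Ej * Ei⁻¹ * p)) =
      2 * c * Complex.I * (Ej * Ei⁻¹ * p) *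
          ((Ej / Ex * Complex.I - Ex / Ej * Complex.I) / 2) +
        -(2 * c) * Complex.I * (Ej * Ei⁻¹ * p) *
          ((Ei / Ex * Complex.I - Ex / Ei * Complex.I) / 2) +
        Ej * Ei⁻¹ * c * (qjx - qxi * p) + Ej * Ei⁻¹ * c * (qxi - qjx * p) := by
  obtain ⟨Fi, hFi⟩ : ∃ y, Ei * y = 1 := ⟨Ei⁻¹, mul_inv_cancel₀ hi⟩
  obtain ⟨Fj, hFj⟩ : ∃ y, Ej * y = 1 := ⟨Ej⁻¹, mul_inv_cancel₀ hj⟩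
  obtain ⟨Fx, hFx⟩ : ∃ y, Ex * y = 1 := ⟨Ex⁻¹, mul_inv_cancel₀ hx⟩
  have ei : Ei⁻¹ = Fi := by exact inv_eq_of_mul_eq_one_right hFi
  have ej : Ej⁻¹ = Fj := by exact inv_eq_of_mul_eq_one_right hFj
  have ex : Ex⁻¹ = Fx := by exact inv_eq_of_mul_eq_one_right hFx
  have di : ∀ z : ℂ, z / Ei = z * Fi := fun z => by rw [div_eq_mul_inv, ei]
  have dj : ∀ z : ℂ, z / Ej = z * Fj := fun z => by rw [div_eq_mul_inv, ej]
  have dx : ∀ z : ℂ, z / Ex = z * Fx := fun z => by rw [div_eq_mul_inv, ex]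
  simp only [ei, ej, ex, di, dj, dx]
  have h2 : Complex.I * Complex.I = -1 := Complex.I_mul_I
  linear_combination
    (c*Ej*Ex*Fi*Fj*p - c*Ej*Ex*Fi^2*p - c*Ej^2*Fi*Fx*p + c*Ei*Ej*Fi*Fx*p) * h2 +
    (-(c*Ej*Ex*Fi*Fx*qxi*p)) * hFi +
    (-(c*Ej*Ex*Fi*Fx*qjx*p)) * hFj +
    (c*Ej*Fi*qxi - c*Ej*Fi*qxi*p + c*Ej*Fi*qjx - c*Ej*Fi*qjx*p) * hFx

theorem stmt_13 (d N : ℕ) (a : Fin N → ℝ) (κ : ℝ) (hκ : 0 < κ)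
    (ψ : Fin N → ℝ → EuclideanSpace ℂ (Fin d)) (θ : Fin N → ℝ → ℝ)
    (hunit : ∀ j t, ‖ψ j t‖ = 1)
    (hψ : ∀ j t, HasDerivAt (ψ j)
      ((Complex.I * (a j : ℂ)) • ψ j t +
        (κ / N) • ∑ k, (ψ k t - (inner ℂ (ψ k t) (ψ j t) : ℂ) • ψ j t)) t)
    (hθ : ∀ j t, HasDerivAt (θ j) (a j + (2 * κ / N) * ∑ k, Real.sin (θ k t - θ j t)) t)
    (ξ : Fin N → ℝ → EuclideanSpace ℂ (Fin d))
    (hξ : ∀ j t, ξ j t = Complex.exp (-(θ j t : ℂ) * Complex.I) • ψ j t)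
    (h : Fin N → Fin N → ℝ → ℂ)
    (hh : ∀ i j t, h i j t = inner ℂ (ξ j t) (ξ i t)) :
    ∀ i j t, HasDerivAt (h i j)
      (((κ : ℂ) / (N : ℂ)) * ∑ k,
        (Complex.exp (((θ k t - θ i t : ℝ) : ℂ) * Complex.I) * (h k j t - h i j t) +
         Complex.exp (((θ i t - θ k t : ℝ) : ℂ) * Complex.I) * (1 - h i k t) * h i j t +
         Complex.exp (((θ j t - θ k t : ℝ) : ℂ) * Complex.I) * (h i k t - h i j t) +
         Complex.exp (((θ k t - θ j t : ℝ) : ℂ) * Complex.I) * (1 - h k j t) * h i j t)) t := by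
  intro i j t
  have hform : ∀ (i j : Fin N) (s : ℝ), h i j s =
      Complex.exp ((θ j s : ℂ) * Complex.I) * Complex.exp (-(θ i s : ℂ) * Complex.I) *
        (inner ℂ (ψ j s) (ψ i s) : ℂ) := by
    intro i j s
    rw [hh, hξ, hξ, inner_smul_left, inner_smul_right, ← Complex.exp_conj]
    simp only [map_mul, map_neg, Complex.conj_I, Complex.conj_ofReal, neg_mul, mul_neg, neg_neg]
    ring
  have hA : HasDerivAt (fun s => Complex.exp ((θ j s : ℂ) * Complex.I))
      (Complex.exp ((θ j t : ℂ) * Complex.I) *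
        (((a j + (2 * κ / N) * ∑ k, Real.sin (θ k t - θ j t) : ℝ) : ℂ) * Complex.I)) t :=
    (((hθ j t).ofReal_comp).mul_const Complex.I).cexp
  have hB : HasDerivAt (fun s => Complex.exp (-(θ i s : ℂ) * Complex.I))
      (Complex.exp (-(θ i t : ℂ) * Complex.I) *
        (-((a i + (2 * κ / N) * ∑ k, Real.sin (θ k t - θ i t) : ℝ) : ℂ) * Complex.I)) t :=
    ((((hθ i t).ofReal_comp).neg.mul_const Complex.I).cexp)
  have hP : HasDerivAt (fun s => (inner ℂ (ψ j s) (ψ i s) : ℂ))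
      ((inner ℂ (ψ j t) ((Complex.I * (a i : ℂ)) • ψ i t +
        (κ / N) • ∑ k, (ψ k t - (inner ℂ (ψ k t) (ψ i t) : ℂ) • ψ i t)) : ℂ) +
       (inner ℂ ((Complex.I * (a j : ℂ)) • ψ j t +
        (κ / N) • ∑ k, (ψ k t - (inner ℂ (ψ k t) (ψ j t) : ℂ) • ψ j t)) (ψ i t) : ℂ)) t :=
    HasDerivAt.inner ℂ (hψ j t) (hψ i t)
  have hD := (hA.mul hB).mul hP
  rw [show h i j = (fun s => Complex.exp ((θ j s : ℂ) * Complex.I) *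
      Complex.exp (-(θ i s : ℂ) * Complex.I) * (inner ℂ (ψ j s) (ψ i s) : ℂ))
    from funext fun s => hform i j s]
  convert hD using 1
  · rfl
  · rfl
  have hsm : ∀ (r : ℝ) (v : EuclideanSpace ℂ (Fin d)), r • v = ((r : ℂ)) • v :=
    fun r v => (algebraMap_smul ℂ r v).symm
  simp only [hform, hsm, inner_add_left, inner_add_right, inner_smul_left, inner_smul_right,
    inner_smul_real_left, inner_smul_real_right, inner_sub_left, inner_sub_right,
    inner_sum, sum_inner, inner_conj_symm, map_mul, Complex.conj_I, Complex.conj_ofReal]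
  push_cast
  simp only [Complex.sin, sub_mul, neg_mul, neg_sub, Complex.exp_sub, Complex.exp_neg]
  rw [Finset.mul_sum]
  rw [Finset.sum_congr rfl (fun x _ => key_alg ((κ : ℂ) / (N : ℂ))
    (Complex.exp ((θ i t : ℂ) * Complex.I)) (Complex.exp ((θ j t : ℂ) * Complex.I))
    (Complex.exp ((θ x t : ℂ) * Complex.I))
    (inner ℂ (ψ j t) (ψ x t)) (inner ℂ (ψ x t) (ψ i t)) (inner ℂ (ψ j t) (ψ i t))
    (Complex.exp_ne_zero _) (Complex.exp_ne_zero _) (Complex.exp_ne_zero _))]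
  simp only [Finset.sum_add_distrib, ← Finset.mul_sum]
  simp only [Pi.mul_apply]
  ring
end

section
/- Suppose the complex scalars h_{ij}(t) (i,j ∈ [N]) satisfy |h_{ij}| ≤ 1 and d/dt(1 - h_{ij}) = -2κ(1-h_{ij}) + (κ/N)Σ_k (1-h_{ik} + 1-h_{kj})(1-h_{ij}) + E_{ij}(t), where the error term satisfies |E_{ij}(t)| ≤ 12κ sin(D(Θ(t))/2) · D(𝓗(t)) with D(𝓗) = max_{i,j}|1-h_{ij}|. Then the (upper Dini) derivative of D(𝓗) satisfies D'(𝓗) ≤ -2κ(1 - 6 sin(D(Θ)/2)) D(𝓗) + 2κ D(𝓗)². -/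
open Filter Complex Finset Topology

lemma abs_add_le_aux (z w : ℂ) (hz : 0 < ‖z‖) :
    ‖z + w‖ ≤ ‖z‖ + ((starRingEnd ℂ) z * w).re / ‖z‖
      + (‖w‖) ^ 2 / (2 * ‖z‖) := by
  set a := ‖z‖ with ha
  set b := ‖z + w‖ with hb
  have hid : b ^ 2 = a ^ 2 + 2 * ((starRingEnd ℂ) z * w).re + (‖w‖) ^ 2 := by
    simp only [ha, hb, Complex.sq_norm, Complex.normSq_apply, Complex.add_re, Complex.add_im,
      Complex.mul_re, Complex.conj_re, Complex.conj_im]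
    ring
  have hkey : b ≤ (a ^ 2 + b ^ 2) / (2 * a) := by
    rw [le_div_iff₀ (by positivity)]
    nlinarith [sq_nonneg (a - b)]
  calc b ≤ (a ^ 2 + b ^ 2) / (2 * a) := hkey
    _ = a + ((starRingEnd ℂ) z * w).re / a + (‖w‖) ^ 2 / (2 * a) := by
        rw [hid]; field_simp; ring

theorem stmt_14 (N : ℕ) (hN : 0 < N) (κ : ℝ) (hκ : 0 < κ)
    (h E : Fin N → Fin N → ℝ → ℂ)
    (DΘ : ℝ → ℝ) (hDΘ : Continuous DΘ) (hDΘ0 : ∀ t, 0 ≤ DΘ t)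
    (D : ℝ → ℝ)
    (hD : ∀ t, D t = Finset.sup' Finset.univ ⟨(⟨0, hN⟩, ⟨0, hN⟩), Finset.mem_univ _⟩
      (fun p : Fin N × Fin N => ‖1 - h p.1 p.2 t‖))
    (hb : ∀ i j t, ‖h i j t‖ ≤ 1)
    (hd : ∀ i j t, HasDerivAt (fun s => 1 - h i j s)
      (-2 * (κ : ℂ) * (1 - h i j t) +
        ((κ : ℂ) / (N : ℂ)) * ∑ k, ((1 - h i k t) + (1 - h k j t)) * (1 - h i j t) +
        E i j t) t)
    (hE : ∀ i j t, ‖E i j t‖ ≤ 12 * κ * Real.sin (DΘ t / 2) * D t) :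
    ∀ t, Filter.limsup (fun s => (D (t + s) - D t) / s) (nhdsWithin 0 (Set.Ioi 0)) ≤
      -2 * κ * (1 - 6 * Real.sin (DΘ t / 2)) * D t + 2 * κ * (D t) ^ 2 := by
  intro t
  set A : ℝ := -2 * κ * (1 - 6 * Real.sin (DΘ t / 2)) * D t + 2 * κ * (D t) ^ 2 with hA
  have hle : ∀ p : Fin N × Fin N, ‖1 - h p.1 p.2 t‖ ≤ D t := by
    intro p
    rw [hD t]
    exact Finset.le_sup' (fun p : Fin N × Fin N => ‖1 - h p.1 p.2 t‖)
      (Finset.mem_univ p)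
  have ha0 : 0 ≤ D t :=
    le_trans (norm_nonneg _) (hle (⟨0, hN⟩, ⟨0, hN⟩))
  have hmap : Tendsto (fun s : ℝ => t + s) (𝓝[>] 0) (𝓝 t) := by
    have h1 : Tendsto (fun s : ℝ => t + s) (𝓝 0) (𝓝 (t + 0)) :=
      (continuous_const.add continuous_id).tendsto 0
    rw [add_zero] at h1
    exact h1.mono_left nhdsWithin_le_nhds
  -- main per-index estimate
  have key : ∀ ε : ℝ, 0 < ε → ∀ p : Fin N × Fin N, ∀ᶠ s in 𝓝[>] (0 : ℝ),
      ‖1 - h p.1 p.2 (t + s)‖ ≤ D t + s * (A + ε) := by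
    intro ε hε p
    obtain ⟨i, j⟩ := p
    rcases lt_or_eq_of_le (hle (i, j)) with hlt | heq
    · -- non-maximizing index
      have h3 : Tendsto (fun s : ℝ => ‖1 - h i j (t + s)‖) (𝓝[>] 0)
          (𝓝 (‖1 - h i j t‖)) :=
        (continuous_norm.continuousAt.comp (hd i j t).continuousAt).tendsto.comp hmap
      have h5 : Tendsto (fun s : ℝ => D t + s * (A + ε)) (𝓝[>] 0) (𝓝 (D t)) := by
        have h6 : Tendsto (fun s : ℝ => D t + s * (A + ε)) (𝓝 0) (𝓝 (D t + 0 * (A + ε))) :=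
          (continuous_const.add (continuous_id.mul continuous_const)).tendsto 0
        rw [zero_mul, add_zero] at h6
        exact h6.mono_left nhdsWithin_le_nhds
      have h7 := (h5.sub h3).eventually (eventually_gt_nhds (sub_pos.mpr hlt))
      filter_upwards [h7] with s hs
      linarith [hs]
    · -- maximizing index
      have hder := hd i j t
      set v : ℂ := -2 * (κ : ℂ) * (1 - h i j t) +
        ((κ : ℂ) / (N : ℂ)) * ∑ k, ((1 - h i k t) + (1 - h k j t)) * (1 - h i j t) +
        E i j t with hv
      rcases eq_or_lt_of_le ha0 with hDt0 | hDt0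
      · -- D t = 0 : everything vanishes
        have hz0 : (1 : ℂ) - h i j t = 0 := by
          have habs : ‖1 - h i j t‖ = 0 := by rw [heq, ← hDt0]
          exact norm_eq_zero.mp habs
        have hE0 : E i j t = 0 := by
          have h1 := hE i j t
          rw [← hDt0] at h1
          simp only [mul_zero] at h1
          exact norm_eq_zero.mp (le_antisymm h1 (norm_nonneg _))
        have hv0 : v = 0 := by
          rw [hv, hz0, hE0]
          simp
        rw [hv0] at hder
        have hlo := hasDerivAt_iff_isLittleO.mp hder
        have hbd := hlo.def hε
        have h8 := hmap.eventually hbd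
        have hA0 : A = 0 := by rw [hA, ← hDt0]; ring
        filter_upwards [h8, self_mem_nhdsWithin] with s hs1 hs2
        have hspos : (0 : ℝ) < s := hs2
        simp only [add_sub_cancel_left, smul_zero, sub_zero, hz0, sub_zero] at hs1
        rw [← hDt0, hA0]
        have : ‖(1 : ℂ) - h i j (t + s)‖ ≤ ε * s := by
          calc ‖(1 : ℂ) - h i j (t + s)‖ ≤ ε * ‖s‖ := hs1
            _ = ε * s := by rw [Real.norm_eq_abs, abs_of_pos hspos]
        calc ‖1 - h i j (t + s)‖ = ‖(1 : ℂ) - h i j (t + s)‖ := rfl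
          _ ≤ ε * s := this
          _ = 0 + s * (0 + ε) := by ring
      · -- D t > 0
        have hz : 0 < ‖1 - h i j t‖ := heq ▸ hDt0
        have hNne : (N : ℝ) ≠ 0 := Nat.cast_ne_zero.mpr hN.ne'
        set z : ℂ := 1 - h i j t with hzdef
        set S : ℂ := ∑ k, ((1 - h i k t) + (1 - h k j t)) with hS
        have hvS : v = -2 * (κ : ℂ) * z + ((κ : ℂ) / N) * (S * z) + E i j t := by
          rw [hv, hS, Finset.sum_mul]
        have hzz : (starRingEnd ℂ) z * z = (((D t) ^ 2 : ℝ) : ℂ) := by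
          have h1 : (starRingEnd ℂ) z * z = (Complex.normSq z : ℂ) := by
            rw [mul_comm, Complex.mul_conj]
          rw [h1, Complex.normSq_eq_norm_sq, heq]
        have hexp : (starRingEnd ℂ) z * v
            = ((-2 * κ * (D t) ^ 2 : ℝ) : ℂ) + ((κ / N * (D t) ^ 2 : ℝ) : ℂ) * S
              + (starRingEnd ℂ) z * E i j t := by
          rw [hvS]
          have : (starRingEnd ℂ) z * (-2 * (κ : ℂ) * z + ((κ : ℂ) / N) * (S * z) + E i j t)
              = -2 * (κ : ℂ) * ((starRingEnd ℂ) z * z)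
                + ((κ : ℂ) / N) * S * ((starRingEnd ℂ) z * z)
                + (starRingEnd ℂ) z * E i j t := by ring
          rw [this, hzz]
          push_cast
          ring
        have hre : ((starRingEnd ℂ) z * v).re
            = -2 * κ * (D t) ^ 2 + (κ / N * (D t) ^ 2) * S.re
              + ((starRingEnd ℂ) z * E i j t).re := by
          rw [hexp]
          simp only [Complex.add_re, Complex.re_ofReal_mul, Complex.ofReal_re]
        have hSre : S.re ≤ 2 * N * D t := by
          calc S.re ≤ ‖S‖ := Complex.re_le_norm S
            _ ≤ ∑ k, ‖(1 - h i k t) + (1 - h k j t)‖ := norm_sum_le _ _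
            _ ≤ ∑ _k : Fin N, (2 * D t) := by
                refine Finset.sum_le_sum fun k _ => ?_
                calc ‖(1 - h i k t) + (1 - h k j t)‖
                    ≤ ‖1 - h i k t‖ + ‖1 - h k j t‖ :=
                      norm_add_le _ _
                  _ ≤ D t + D t := add_le_add (hle (i, k)) (hle (k, j))
                  _ = 2 * D t := by ring
            _ = 2 * N * D t := by
                rw [Finset.sum_const, Finset.card_univ, Fintype.card_fin, nsmul_eq_mul]; ring
        have hmid : (κ / N * (D t) ^ 2) * S.re ≤ 2 * κ * (D t) ^ 3 := by
          have h0 : (0 : ℝ) ≤ κ / N * (D t) ^ 2 := by positivity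
          calc (κ / N * (D t) ^ 2) * S.re ≤ (κ / N * (D t) ^ 2) * (2 * N * D t) :=
                mul_le_mul_of_nonneg_left hSre h0
            _ = 2 * κ * (D t) ^ 3 := by field_simp
        have hEre : ((starRingEnd ℂ) z * E i j t).re
            ≤ 12 * κ * Real.sin (DΘ t / 2) * (D t) ^ 2 := by
          calc ((starRingEnd ℂ) z * E i j t).re ≤ ‖(starRingEnd ℂ) z * E i j t‖ :=
                Complex.re_le_norm _
            _ = ‖z‖ * ‖E i j t‖ := by
                rw [norm_mul, Complex.norm_conj]
            _ ≤ D t * (12 * κ * Real.sin (DΘ t / 2) * D t) := by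
                rw [heq]
                exact mul_le_mul_of_nonneg_left (hE i j t) ha0
            _ = 12 * κ * Real.sin (DΘ t / 2) * (D t) ^ 2 := by ring
        have hrv : ((starRingEnd ℂ) z * v).re ≤ D t * A := by
          have hAexp : D t * A = -2 * κ * (D t) ^ 2 + 12 * κ * Real.sin (DΘ t / 2) * (D t) ^ 2
              + 2 * κ * (D t) ^ 3 := by rw [hA]; ring
          rw [hre, hAexp]
          linarith
        -- now the eventual estimate
        have hlo := (hasDerivAt_iff_isLittleO.mp hder).def (half_pos hε)
        have h1 := hmap.eventually hlo
        have h2 : ∀ᶠ s in 𝓝[>] (0 : ℝ), s * (‖v‖ ^ 2 / (2 * D t)) ≤ ε / 2 := by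
          have hten : Tendsto (fun s : ℝ => s * (‖v‖ ^ 2 / (2 * D t))) (𝓝 0)
              (𝓝 (0 * (‖v‖ ^ 2 / (2 * D t)))) :=
            (continuous_id.mul continuous_const).tendsto 0
          rw [zero_mul] at hten
          exact (hten.mono_left nhdsWithin_le_nhds).eventually (eventually_le_nhds (half_pos hε))
        filter_upwards [h1, h2, self_mem_nhdsWithin] with s hs1 hs2 hs3
        have hspos : (0 : ℝ) < s := hs3
        simp only [add_sub_cancel_left] at hs1
        have hsnorm : ‖s‖ = s := by rw [Real.norm_eq_abs, abs_of_pos hspos]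
        rw [hsnorm] at hs1
        -- hs1 : ‖(1 - h i j (t+s)) - (1 - h i j t) - s • v‖ ≤ ε/2 * s
        have htri : ‖1 - h i j (t + s)‖ ≤ ‖z + s • v‖ + ε / 2 * s := by
          have hrw : (1 : ℂ) - h i j (t + s)
              = (z + s • v) + ((1 - h i j (t + s)) - (1 - h i j t) - s • v) := by
            rw [hzdef]; ring
          calc ‖1 - h i j (t + s)‖
              = ‖(z + s • v) + ((1 - h i j (t + s)) - (1 - h i j t) - s • v)‖ :=
                congrArg (‖·‖) hrw
            _ ≤ ‖z + s • v‖
                + ‖(1 - h i j (t + s)) - (1 - h i j t) - s • v‖ :=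
                norm_add_le _ _
            _ ≤ ‖z + s • v‖ + ε / 2 * s := by
                have hs1' : ‖(1 - h i j (t + s)) - (1 - h i j t) - s • v‖ ≤ ε / 2 * s := by
                  simpa only using hs1
                exact add_le_add_right hs1' _
        have hsv_re : ((starRingEnd ℂ) z * (s • v)).re = s * ((starRingEnd ℂ) z * v).re := by
          rw [Complex.real_smul, mul_comm ((s : ℂ)) v, ← mul_assoc, mul_comm ((starRingEnd ℂ) z * v) ((s : ℂ)), Complex.re_ofReal_mul]
        have hsv_abs : ‖s • v‖ = s * ‖v‖ := by
          rw [Complex.real_smul, norm_mul, Complex.norm_real, Real.norm_eq_abs, abs_of_pos hspos]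
        have hmain : ‖z + s • v‖ ≤ D t + s * A + ε / 2 * s := by
          have haux := abs_add_le_aux z (s • v) hz
          rw [heq] at haux
          have hterm2 : ((starRingEnd ℂ) z * (s • v)).re / D t ≤ s * A := by
            rw [hsv_re, div_le_iff₀ hDt0]
            calc s * ((starRingEnd ℂ) z * v).re ≤ s * (D t * A) :=
                  mul_le_mul_of_nonneg_left hrv hspos.le
              _ = s * A * D t := by ring
          have hterm3 : (‖s • v‖) ^ 2 / (2 * D t) ≤ ε / 2 * s := by
            rw [hsv_abs]
            have : (s * ‖v‖) ^ 2 / (2 * D t)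
                = s * (s * (‖v‖ ^ 2 / (2 * D t))) := by
              field_simp
            rw [this]
            calc s * (s * (‖v‖ ^ 2 / (2 * D t))) ≤ s * (ε / 2) :=
                  mul_le_mul_of_nonneg_left hs2 hspos.le
              _ = ε / 2 * s := by ring
          linarith
        calc ‖1 - h i j (t + s)‖ ≤ ‖z + s • v‖ + ε / 2 * s := htri
          _ ≤ D t + s * A + ε / 2 * s + ε / 2 * s := by linarith
          _ = D t + s * (A + ε) := by ring
  -- combine indices
  have key2 : ∀ ε : ℝ, 0 < ε → ∀ᶠ s in 𝓝[>] (0 : ℝ), (D (t + s) - D t) / s ≤ A + ε := by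
    intro ε hε
    have hall : ∀ᶠ s in 𝓝[>] (0 : ℝ), ∀ p : Fin N × Fin N,
        ‖1 - h p.1 p.2 (t + s)‖ ≤ D t + s * (A + ε) :=
      (Filter.eventually_all).mpr (key ε hε)
    filter_upwards [hall, self_mem_nhdsWithin] with s hs hspos
    have hspos' : (0 : ℝ) < s := hspos
    have hDts : D (t + s) ≤ D t + s * (A + ε) := by
      rw [hD (t + s)]
      exact Finset.sup'_le _ _ fun p _ => hs p
    rw [div_le_iff₀ hspos']
    linarith
  -- lower bound for coboundedness
  have hcb : IsCoboundedUnder (· ≤ ·) (𝓝[>] (0 : ℝ)) (fun s => (D (t + s) - D t) / s) := by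
    obtain ⟨p, _, hp⟩ := Finset.exists_mem_eq_sup' (α := ℝ)
      (⟨((⟨0, hN⟩ : Fin N), (⟨0, hN⟩ : Fin N)), Finset.mem_univ _⟩)
      (fun p : Fin N × Fin N => ‖1 - h p.1 p.2 t‖)
    obtain ⟨i, j⟩ := p
    have hpt : D t = ‖1 - h i j t‖ := by rw [hD t, hp]
    set v : ℂ := -2 * (κ : ℂ) * (1 - h i j t) +
      ((κ : ℂ) / (N : ℂ)) * ∑ k, ((1 - h i k t) + (1 - h k j t)) * (1 - h i j t) +
      E i j t with hv
    have hlo := (hasDerivAt_iff_isLittleO.mp (hd i j t)).def one_pos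
    have h1 := hmap.eventually hlo
    apply Filter.IsBoundedUnder.isCoboundedUnder_le
    refine ⟨-(‖v‖ + 1), ?_⟩
    simp only [eventually_map]
    filter_upwards [h1, self_mem_nhdsWithin] with s hs1 hs2
    have hspos : (0 : ℝ) < s := hs2
    simp only [add_sub_cancel_left] at hs1
    rw [Real.norm_eq_abs, abs_of_pos hspos, one_mul] at hs1
    have hlb : ‖1 - h i j (t + s)‖ ≥ D t - s * (‖v‖ + 1) := by
      have h3 : ‖1 - h i j t‖ - ‖(1 - h i j (t + s)) - (1 - h i j t)‖
          ≤ ‖1 - h i j (t + s)‖ := by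
        have h4 := norm_add_le ((1 : ℂ) - h i j (t + s))
          ((1 - h i j t) - (1 - h i j (t + s)))
        have h5 : ((1 : ℂ) - h i j (t + s)) + ((1 - h i j t) - (1 - h i j (t + s)))
            = 1 - h i j t := by ring
        rw [h5] at h4
        have h6 : ‖(1 - h i j t) - (1 - h i j (t + s))‖
            = ‖(1 - h i j (t + s)) - (1 - h i j t)‖ :=
          norm_sub_rev _ _
        linarith
      have h5 : ‖(1 - h i j (t + s)) - (1 - h i j t)‖ ≤ s * (‖v‖ + 1) := by
        have h6 : (1 : ℂ) - h i j (t + s) - (1 - h i j t)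
            = ((1 - h i j (t + s)) - (1 - h i j t) - s • v) + s • v := by ring
        calc ‖(1 - h i j (t + s)) - (1 - h i j t)‖
            = ‖((1 - h i j (t + s)) - (1 - h i j t) - s • v) + s • v‖ :=
              congrArg (‖·‖) h6
          _ ≤ ‖(1 - h i j (t + s)) - (1 - h i j t) - s • v‖
              + ‖s • v‖ := norm_add_le _ _
          _ ≤ s + s * ‖v‖ := by
              have h7 : ‖s • v‖ = s * ‖v‖ := by
                rw [Complex.real_smul, norm_mul, Complex.norm_real, Real.norm_eq_abs, abs_of_pos hspos]
              rw [h7]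
              have hs1' : ‖(1 - h i j (t + s)) - (1 - h i j t) - s • v‖ ≤ s := by
                simpa only using hs1
              exact add_le_add hs1' le_rfl
          _ = s * (‖v‖ + 1) := by ring
      rw [hpt]
      linarith
    have hDlb : ‖1 - h i j (t + s)‖ ≤ D (t + s) := by
      rw [hD (t + s)]
      exact Finset.le_sup' (fun p : Fin N × Fin N => ‖1 - h p.1 p.2 (t + s)‖)
        (Finset.mem_univ (i, j))
    rw [le_div_iff₀ hspos]
    nlinarith [hlb, hDlb]
  refine le_of_forall_gt_imp_ge_of_dense fun b hb => ?_
  have hε : 0 < b - A := sub_pos.mpr hb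
  have := Filter.limsup_le_of_le hcb (key2 (b - A) hε)
  simpa using this
end
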